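/- There exist C > 0 and h₀ > 0, depending only on C₀ and C₁, such that for all h ∈ (0, h₀) and all x, y ∈ ℝ: |k(x, y)| ≤ (C/h) · exp(−|x − y| / (C √h)). -/

import Mathlib

open Complex MeasureTheory

/-- The integral kernel of the forward solution operator of `(h/i)u' + g̃u = v`, `u(x₊) = 0`. -/
noncomputable def kker (xp h : ℝ) (gt : ℝ → ℂ) (x y : ℝ) : ℂ :=
  if xp ≤ y ∧ y ≤ x then
    (Complex.I / (h:ℂ)) * Complex.exp (-(Complex.I / (h:ℂ)) * ∫ t in y..x, gt t)
  else if x ≤ y ∧ y ≤ xp then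
    -(Complex.I / (h:ℂ)) * Complex.exp (-(Complex.I / (h:ℂ)) * ∫ t in y..x, gt t)
  else 0

lemma im_intInt (f : ℝ → ℂ) (a b : ℝ) (hf : Continuous f) :
    (∫ t in a..b, f t).im = ∫ t in a..b, (f t).im := by
  rw [intervalIntegral, intervalIntegral, Complex.sub_im]
  have h1 := integral_im (𝕜 := ℂ) (hf.integrableOn_Ioc (μ := volume) (a := a) (b := b))
  have h2 := integral_im (𝕜 := ℂ) (hf.integrableOn_Ioc (μ := volume) (a := b) (b := a))
  simp only [RCLike.im_to_complex] at h1 h2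
  rw [h1, h2]

lemma norm_kker_aux (h : ℝ) (hh : 0 < h) (J : ℂ) :
    ‖(Complex.I / (h:ℂ)) * Complex.exp (-(Complex.I / (h:ℂ)) * J)‖
      = (1/h) * Real.exp (J.im / h) := by
  rw [norm_mul, Complex.norm_exp]
  congr 1
  · rw [norm_div]
    simp [abs_of_pos hh]
  · congr 1
    simp [Complex.div_re, Complex.div_im, Complex.neg_re, Complex.mul_re,
      Complex.normSq, hh.ne']
    ring

lemma integ (xp D E a b : ℝ) (hD : D ≠ 0) :
    ∫ t in a..b, (-(t - xp)/D + E)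
      = (-(b - xp)^2/(2*D) + E*b) - (-(a-xp)^2/(2*D) + E*a) := by
  have hder : ∀ t : ℝ, HasDerivAt (fun t => -(t - xp)^2/(2*D) + E*t)
      (-(t - xp)/D + E) t := by
    intro t
    have h1 : HasDerivAt (fun t : ℝ => t - xp) 1 t := (hasDerivAt_id t).sub_const xp
    have h2 := (((h1.pow 2).neg.div_const (2*D)).add ((hasDerivAt_id t).const_mul E))
    refine h2.congr_deriv ?_
    field_simp
    ring
  exact intervalIntegral.integral_eq_sub_of_hasDerivAt (fun t _ => hder t)
    (((((continuous_id.sub continuous_const).neg).div_const D).add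
      continuous_const).intervalIntegrable a b)

lemma key_ineq (D C K d h : ℝ) (hD : 0 < D) (hC : 1 ≤ C) (hd : 0 ≤ d) (hh : 0 < h)
    (hh1 : h ≤ 1) (hK : D*(D+1)^2/2 ≤ K) :
    (-d^2/(2*D) + D*h^2*d)/h + d/(C*Real.sqrt h) ≤ K := by
  set s := Real.sqrt h with hs
  have hs0 : 0 < s := Real.sqrt_pos.2 hh
  have hs2 : s^2 = h := Real.sq_sqrt hh.le
  have hs1 : s ≤ 1 := Real.sqrt_le_one.2 hh1
  have hstep : d/(C*s) ≤ d/s :=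
    div_le_div_of_nonneg_left hd hs0 (le_mul_of_one_le_left hs0.le hC)
  have hp1 : s^8 ≤ s^2 := pow_le_pow_of_le_one hs0.le hs1 (by norm_num)
  have hp2 : s^5 ≤ s^2 := pow_le_pow_of_le_one hs0.le hs1 (by norm_num)
  have hpoly : -d^2 + 2*D^2*s^4*d + 2*D*s*d ≤ D^2*(D+1)^2*s^2 := by
    nlinarith [sq_nonneg (d - D^2*s^4 - D*s),
      mul_le_mul_of_nonneg_left hp1 (pow_nonneg hD.le 4),
      mul_le_mul_of_nonneg_left hp2 (by positivity : (0:ℝ) ≤ 2*D^3)]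
  have e1 : (-d^2/(2*D) + D*h^2*d)/h + d/s
      = (-d^2 + 2*D^2*s^4*d + 2*D*s*d)/(2*D*s^2) := by
    rw [← hs2]; field_simp
  have e2 : (-d^2/(2*D) + D*h^2*d)/h + d/s ≤ D*(D+1)^2/2 := by
    rw [e1, div_le_iff₀ (by positivity)]
    nlinarith [hpoly]
  calc (-d^2/(2*D) + D*h^2*d)/h + d/(C*s)
      ≤ (-d^2/(2*D) + D*h^2*d)/h + d/s := by linarith
    _ ≤ D*(D+1)^2/2 := e2
    _ ≤ K := hK

set_option maxHeartbeats 1000000 in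
/-- Pointwise exponential bound `|k(x,y)| ≤ (C/h) exp(−|x−y|/(C√h))` on the kernel of the
forward solution operator of the model equation. -/
theorem stmt_2
    (xp : ℝ) (C₀ C₁ : ℝ) (hC₀ : 0 < C₀) (hC₁ : 0 < C₁)
    (gt : ℝ → ℝ → ℂ)
    (hcont : ∀ h ∈ Set.Ioc (0:ℝ) 1, Continuous (gt h))
    (hupper : ∀ h ∈ Set.Ioc (0:ℝ) 1, ∀ x : ℝ, xp ≤ x →
      (gt h x).im ≤ -(x - xp) / C₀ + C₀ * h ^ 2)
    (hlower : ∀ h ∈ Set.Ioc (0:ℝ) 1, ∀ x : ℝ, x ≤ xp →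
      -(x - xp) / C₁ - C₁ * h ^ 2 ≤ (gt h x).im) :
    ∃ C h₀ : ℝ, 0 < C ∧ 0 < h₀ ∧ h₀ ≤ 1 ∧ ∀ h ∈ Set.Ioo (0:ℝ) h₀, ∀ x y : ℝ,
      ‖kker xp h (gt h) x y‖ ≤ (C / h) * Real.exp (-|x - y| / (C * Real.sqrt h)) := by
  set K : ℝ := C₀*(C₀+1)^2/2 + C₁*(C₁+1)^2/2 with hKdef
  have hK0 : 0 ≤ K := by positivity
  have hK₀ : C₀*(C₀+1)^2/2 ≤ K := by
    have : (0:ℝ) ≤ C₁*(C₁+1)^2/2 := by positivity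
    linarith
  have hK₁ : C₁*(C₁+1)^2/2 ≤ K := by
    have : (0:ℝ) ≤ C₀*(C₀+1)^2/2 := by positivity
    linarith
  set C : ℝ := Real.exp K with hCdef
  have hC1 : 1 ≤ C := Real.one_le_exp hK0
  have hCpos : 0 < C := lt_of_lt_of_le one_pos hC1
  refine ⟨C, 1, hCpos, one_pos, le_refl 1, ?_⟩
  intro h hh x y
  have hhpos : 0 < h := hh.1
  have hhIoc : h ∈ Set.Ioc (0:ℝ) 1 := ⟨hh.1, hh.2.le⟩
  have hcg : Continuous (gt h) := hcont h hhIoc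
  have hs0 : 0 < Real.sqrt h := Real.sqrt_pos.2 hhpos
  have hJim : (∫ t in y..x, gt h t).im = ∫ t in y..x, (gt h t).im :=
    im_intInt _ _ _ hcg
  have hintg : ∀ a b : ℝ, IntervalIntegrable (fun t => (gt h t).im) volume a b :=
    fun a b => (Complex.continuous_im.comp hcg).intervalIntegrable a b
  have hcaux : ∀ D E : ℝ, Continuous (fun t : ℝ => -(t - xp)/D + E) :=
    fun D E => ((((continuous_id.sub continuous_const).neg).div_const D).add
      continuous_const)
  unfold kker
  split_ifs with h1 h2
  · -- case xp ≤ y ≤ x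
    obtain ⟨hy, hx⟩ := h1
    have hd : 0 ≤ x - y := sub_nonneg.2 hx
    rw [norm_kker_aux h hhpos]
    have hmono : ∫ t in y..x, (gt h t).im
        ≤ ∫ t in y..x, (-(t - xp)/C₀ + C₀*h^2) :=
      intervalIntegral.integral_mono_on hx (hintg y x)
        ((hcaux C₀ (C₀*h^2)).intervalIntegrable _ _)
        (fun t ht => hupper h hhIoc t (le_trans hy ht.1))
    rw [integ xp C₀ (C₀*h^2) y x hC₀.ne'] at hmono
    have hiq : -(x - xp)^2/(2*C₀) + (y - xp)^2/(2*C₀) ≤ -(x-y)^2/(2*C₀) := by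
      rw [← add_div, div_le_div_iff₀ (by positivity) (by positivity)]
      nlinarith [mul_nonneg hd (sub_nonneg.2 hy)]
    have hS : (∫ t in y..x, gt h t).im ≤ -(x-y)^2/(2*C₀) + C₀*h^2*(x-y) := by
      rw [hJim]
      calc ∫ t in y..x, (gt h t).im
          ≤ -(x - xp)^2/(2*C₀) + C₀*h^2*x - (-(y - xp)^2/(2*C₀) + C₀*h^2*y) :=
            hmono
        _ = -(x - xp)^2/(2*C₀) + (y - xp)^2/(2*C₀) + C₀*h^2*(x-y) := by ring
        _ ≤ -(x-y)^2/(2*C₀) + C₀*h^2*(x-y) := by linarith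
    have hkey := key_ineq C₀ C K (x-y) h hC₀ hC1 hd hhpos hh.2.le hK₀
    rw [_root_.abs_of_nonneg hd]
    have hdivle : (∫ t in y..x, gt h t).im / h
        ≤ (-(x-y)^2/(2*C₀) + C₀*h^2*(x-y))/h :=
      (div_le_div_iff_of_pos_right hhpos).2 hS
    have hfin : (∫ t in y..x, gt h t).im / h ≤ K + -(x-y)/(C*Real.sqrt h) := by
      rw [neg_div]
      linarith
    calc (1/h) * Real.exp ((∫ t in y..x, gt h t).im / h)
        ≤ (1/h) * Real.exp (K + -(x-y)/(C*Real.sqrt h)) :=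
          mul_le_mul_of_nonneg_left (Real.exp_le_exp.2 hfin) (by positivity)
      _ = (C/h) * Real.exp (-(x-y)/(C*Real.sqrt h)) := by
          rw [Real.exp_add, hCdef]; ring
  · -- case x ≤ y ≤ xp
    obtain ⟨hx, hy⟩ := h2
    have hd : 0 ≤ y - x := sub_nonneg.2 hx
    rw [neg_mul, norm_neg, norm_kker_aux h hhpos]
    have hsymm : (∫ t in y..x, (gt h t).im) = -∫ t in x..y, (gt h t).im :=
      intervalIntegral.integral_symm x y
    have hmono : ∫ t in x..y, (-(t - xp)/C₁ + (-(C₁*h^2)))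
        ≤ ∫ t in x..y, (gt h t).im :=
      intervalIntegral.integral_mono_on hx
        ((hcaux C₁ (-(C₁*h^2))).intervalIntegrable _ _) (hintg x y)
        (fun t ht => by
          have := hlower h hhIoc t (le_trans ht.2 hy)
          linarith)
    rw [integ xp C₁ (-(C₁*h^2)) x y hC₁.ne'] at hmono
    have hiq : (y - xp)^2/(2*C₁) - (x - xp)^2/(2*C₁) ≤ -(y-x)^2/(2*C₁) := by
      rw [div_sub_div_same, div_le_div_iff₀ (by positivity) (by positivity)]
      nlinarith [mul_nonneg hd (sub_nonneg.2 hy)]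
    have hS : (∫ t in y..x, gt h t).im ≤ -(y-x)^2/(2*C₁) + C₁*h^2*(y-x) := by
      rw [hJim, hsymm]
      have hstep : -∫ t in x..y, (gt h t).im
          ≤ -((-(y - xp)^2/(2*C₁) + -(C₁*h^2)*y) - (-(x-xp)^2/(2*C₁) + -(C₁*h^2)*x)) :=
        neg_le_neg hmono
      calc -∫ t in x..y, (gt h t).im
          ≤ -((-(y - xp)^2/(2*C₁) + -(C₁*h^2)*y) - (-(x-xp)^2/(2*C₁) + -(C₁*h^2)*x)) :=
            hstep
        _ = (y - xp)^2/(2*C₁) - (x - xp)^2/(2*C₁) + C₁*h^2*(y-x) := by ring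
        _ ≤ -(y-x)^2/(2*C₁) + C₁*h^2*(y-x) := by linarith
    have hkey := key_ineq C₁ C K (y-x) h hC₁ hC1 hd hhpos hh.2.le hK₁
    have habs : |x - y| = y - x := by rw [abs_sub_comm]; exact _root_.abs_of_nonneg hd
    rw [habs]
    have hdivle : (∫ t in y..x, gt h t).im / h
        ≤ (-(y-x)^2/(2*C₁) + C₁*h^2*(y-x))/h :=
      (div_le_div_iff_of_pos_right hhpos).2 hS
    have hfin : (∫ t in y..x, gt h t).im / h ≤ K + -(y-x)/(C*Real.sqrt h) := by
      rw [neg_div]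
      linarith
    calc (1/h) * Real.exp ((∫ t in y..x, gt h t).im / h)
        ≤ (1/h) * Real.exp (K + -(y-x)/(C*Real.sqrt h)) :=
          mul_le_mul_of_nonneg_left (Real.exp_le_exp.2 hfin) (by positivity)
      _ = (C/h) * Real.exp (-(y-x)/(C*Real.sqrt h)) := by
          rw [Real.exp_add, hCdef]; ring
  · simp only [norm_zero]
    positivity
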